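/- Let k, m be integers, and let G be the group with presentation ⟨a, b, c, d, q, t ∣ a q a⁻¹ = c q c⁻¹, q a q⁻¹ = b, q c q⁻¹ = d, t a t⁻¹ = c⁻¹, t b t⁻¹ = c d⁻¹ c⁻¹, a b⁻¹ = 1, q⁻¹ t⁻¹ q t a^{2k} = 1, a⁻¹ c q^{2m} = 1⟩. Then G is isomorphic to the semidirect product ℤ² ⋊_A ℤ, where the generator of ℤ acts on ℤ² by the matrix A = [[−1, −2k], [2m, 4km+1]]. -/

import Mathlib

/-- The relators of the presentation
`⟨a, b, c, d, q, t ∣ a q a⁻¹ = c q c⁻¹, q a q⁻¹ = b, q c q⁻¹ = d, t a t⁻¹ = c⁻¹,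
t b t⁻¹ = c d⁻¹ c⁻¹, a b⁻¹ = 1, q⁻¹ t⁻¹ q t a^{2k} = 1, a⁻¹ c q^{2m} = 1⟩`
on the generators `a = 0`, `b = 1`, `c = 2`, `d = 3`, `q = 4`, `t = 5`. -/
def solRels (k m : ℤ) : Set (FreeGroup (Fin 6)) :=
  letI a : FreeGroup (Fin 6) := FreeGroup.of 0
  letI b : FreeGroup (Fin 6) := FreeGroup.of 1
  letI c : FreeGroup (Fin 6) := FreeGroup.of 2
  letI d : FreeGroup (Fin 6) := FreeGroup.of 3
  letI q : FreeGroup (Fin 6) := FreeGroup.of 4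
  letI t : FreeGroup (Fin 6) := FreeGroup.of 5
  { a * q * a⁻¹ * (c * q * c⁻¹)⁻¹,
    q * a * q⁻¹ * b⁻¹,
    q * c * q⁻¹ * d⁻¹,
    t * a * t⁻¹ * c,
    t * b * t⁻¹ * (c * d⁻¹ * c⁻¹)⁻¹,
    a * b⁻¹,
    q⁻¹ * t⁻¹ * q * t * a ^ (2 * k),
    a⁻¹ * c * q ^ (2 * m) }

/-- The matrix `A = [[−1, −2k], [2m, 4km+1]]`. -/
def solMatrix (k m : ℤ) : Matrix (Fin 2) (Fin 2) ℤ :=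
  !![-1, -2 * k; 2 * m, 4 * k * m + 1]

/-- `A = [[−1, −2k], [2m, 4km+1]]` has determinant `−1`, hence is invertible over `ℤ`. -/
noncomputable def solMatrixInvertible (k m : ℤ) : Invertible (solMatrix k m) :=
  (solMatrix k m).invertibleOfIsUnitDet (by
    rw [solMatrix, Matrix.det_fin_two_of]
    have : (-1 : ℤ) * (4 * k * m + 1) - (-2 * k) * (2 * m) = -1 := by ring
    rw [this]
    exact isUnit_one.neg)

/-- The action of `ℤ` on `ℤ²` in which the generator of `ℤ` acts by the matrix
`A = [[−1, −2k], [2m, 4km+1]]`, written multiplicatively. -/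
noncomputable def solAction (k m : ℤ) :
    Multiplicative ℤ →* MulAut (Multiplicative (Fin 2 → ℤ)) :=
  zpowersHom (MulAut (Multiplicative (Fin 2 → ℤ)))
    (AddEquiv.toMultiplicative
      ((solMatrix k m).toLinearEquiv' (solMatrixInvertible k m)).toAddEquiv)

/-- The semidirect product `ℤ² ⋊_A ℤ`, where the generator of `ℤ` acts on `ℤ²` by
`A = [[−1, −2k], [2m, 4km+1]]`. -/
noncomputable def SolGroup (k m : ℤ) : Type :=
  Multiplicative (Fin 2 → ℤ) ⋊[solAction k m] Multiplicative ℤ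

noncomputable instance (k m : ℤ) : Group (SolGroup k m) := by
  unfold SolGroup; infer_instance

namespace Sol18
variable (k m : ℤ)

abbrev P (k m : ℤ) := PresentedGroup (solRels k m)

lemma rel_one {r : FreeGroup (Fin 6)} (hr : r ∈ solRels k m) :
    (QuotientGroup.mk r : P k m) = 1 :=
  (QuotientGroup.eq_one_iff r).2 (Subgroup.subset_normalClosure hr)

local notation "A" => (PresentedGroup.of (rels := solRels k m) 0)
local notation "B" => (PresentedGroup.of (rels := solRels k m) 1)
local notation "C" => (PresentedGroup.of (rels := solRels k m) 2)
local notation "D" => (PresentedGroup.of (rels := solRels k m) 3)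
local notation "Q" => (PresentedGroup.of (rels := solRels k m) 4)
local notation "T" => (PresentedGroup.of (rels := solRels k m) 5)


lemma ofm (x : Fin 6) : (QuotientGroup.mk (FreeGroup.of x) : P k m) = PresentedGroup.of x := rfl

lemma hAB : A = B := by
  have := rel_one k m (r := FreeGroup.of 0 * (FreeGroup.of 1)⁻¹) (by simp [solRels])
  simp only [QuotientGroup.mk_mul, QuotientGroup.mk_inv, ofm] at this
  exact (mul_inv_eq_one).1 this

lemma hQA : Q * A * Q⁻¹ = A := by
  have := rel_one k m
    (r := FreeGroup.of 4 * FreeGroup.of 0 * (FreeGroup.of 4)⁻¹ * (FreeGroup.of 1)⁻¹)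
    (by simp [solRels])
  simp only [QuotientGroup.mk_mul, QuotientGroup.mk_inv, ofm] at this
  have this : (Q * A * Q⁻¹ : P k m) = B := (mul_inv_eq_one (G := P k m)).1 this
  rw [this, ← hAB]

lemma commAQ : Commute A Q := by
  have h := hQA k m
  have : Q * A = A * Q := by
    calc Q * A = Q * A * Q⁻¹ * Q := by group
    _ = A * Q := by rw [h]
  exact this.symm

lemma hC : C = A * Q ^ (-(2 * m)) := by
  have := rel_one k m
    (r := (FreeGroup.of 0)⁻¹ * FreeGroup.of 2 * (FreeGroup.of 4) ^ (2 * m))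
    (by simp [solRels])
  simp only [QuotientGroup.mk_mul, QuotientGroup.mk_inv, QuotientGroup.mk_zpow, ofm] at this
  have h2 : C = A * (Q ^ (2 * m))⁻¹ := by
    rw [← mul_inv_eq_one]
    calc C * (A * (Q ^ (2*m))⁻¹)⁻¹
        = A * ((A)⁻¹ * C * Q ^ (2*m)) * A⁻¹ := by group
      _ = 1 := by rw [show (A⁻¹ * C * Q ^ (2*m) : P k m) = 1 from this]; group
  rw [h2, zpow_neg]

lemma commCQ : Commute C Q := by
  rw [hC]
  exact (commAQ k m).mul_left (Commute.zpow_self Q (-(2*m)))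

lemma hD : D = C := by
  have := rel_one k m
    (r := FreeGroup.of 4 * FreeGroup.of 2 * (FreeGroup.of 4)⁻¹ * (FreeGroup.of 3)⁻¹)
    (by simp [solRels])
  simp only [QuotientGroup.mk_mul, QuotientGroup.mk_inv, ofm] at this
  have this : (Q * C * Q⁻¹ : P k m) = D := (mul_inv_eq_one (G := P k m)).1 this
  rw [← this]
  rw [mul_assoc, (commCQ k m).inv_right.eq, ← mul_assoc]
  group

lemma hTA : T * A * T⁻¹ = C⁻¹ := by
  have := rel_one k m
    (r := FreeGroup.of 5 * FreeGroup.of 0 * (FreeGroup.of 5)⁻¹ * FreeGroup.of 2)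
    (by simp [solRels])
  simp only [QuotientGroup.mk_mul, QuotientGroup.mk_inv, ofm] at this
  rw [← mul_inv_eq_one]
  calc T * A * T⁻¹ * (C⁻¹)⁻¹ = T * A * T⁻¹ * C := by group
    _ = 1 := this

lemma hTinvQ : T⁻¹ * Q * T = Q * A ^ (-(2 * k)) := by
  have := rel_one k m
    (r := (FreeGroup.of 4)⁻¹ * (FreeGroup.of 5)⁻¹ * FreeGroup.of 4 * FreeGroup.of 5
      * (FreeGroup.of 0) ^ (2 * k))
    (by simp [solRels])
  simp only [QuotientGroup.mk_mul, QuotientGroup.mk_inv, QuotientGroup.mk_zpow, ofm] at this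
  rw [← mul_inv_eq_one]
  calc T⁻¹ * Q * T * (Q * A ^ (-(2*k)))⁻¹
      = Q * ((Q)⁻¹ * T⁻¹ * Q * T * A ^ (2*k)) * Q⁻¹ := by
        rw [zpow_neg]; group
    _ = 1 := by rw [show ((Q)⁻¹ * T⁻¹ * Q * T * A ^ (2*k) : P k m) = 1 from this]; group

lemma hconj (x : P k m) (n : ℤ) : T * x ^ n * T⁻¹ = (T * x * T⁻¹) ^ n := by
  simpa [MulAut.conj_apply] using map_zpow (MulAut.conj (T)) x n

lemma hTQ : T * Q * T⁻¹ = Q * C ^ (-(2 * k)) := by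
  have h2 : (T * Q * T⁻¹) * C ^ (2 * k) = Q := by
    calc (T * Q * T⁻¹) * C ^ (2 * k)
        = T * Q * T⁻¹ * ((C⁻¹) ^ (-(2 * k))) := by rw [inv_zpow, zpow_neg, inv_inv]
      _ = T * Q * T⁻¹ * (T * A * T⁻¹) ^ (-(2 * k)) := by rw [hTA]
      _ = T * Q * T⁻¹ * (T * A ^ (-(2 * k)) * T⁻¹) := by rw [hconj]
      _ = T * (Q * A ^ (-(2 * k))) * T⁻¹ := by group
      _ = T * (T⁻¹ * Q * T) * T⁻¹ := by rw [hTinvQ]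
      _ = Q := by group
  calc T * Q * T⁻¹ = (T * Q * T⁻¹ * C ^ (2 * k)) * C ^ (-(2 * k)) := by group
    _ = Q * C ^ (-(2 * k)) := by rw [h2]

def w (x y : ℤ) : P k m := A ^ x * Q ^ y

lemma w_eq {x y x' y' : ℤ} (hx : x = x') (hy : y = y') : w k m x y = w k m x' y' := by
  rw [hx, hy]

lemma w_mul (x₁ y₁ x₂ y₂ : ℤ) :
    w k m x₁ y₁ * w k m x₂ y₂ = w k m (x₁ + x₂) (y₁ + y₂) := by
  unfold w
  have h := ((commAQ k m).symm.zpow_zpow y₁ x₂).eq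
  calc A ^ x₁ * Q ^ y₁ * (A ^ x₂ * Q ^ y₂)
      = A ^ x₁ * (Q ^ y₁ * A ^ x₂) * Q ^ y₂ := by group
    _ = A ^ x₁ * (A ^ x₂ * Q ^ y₁) * Q ^ y₂ := by rw [h]
    _ = A ^ (x₁ + x₂) * Q ^ (y₁ + y₂) := by rw [zpow_add, zpow_add]; group

lemma w_zpow (x y n : ℤ) : (w k m x y) ^ n = w k m (n * x) (n * y) := by
  unfold w
  rw [((commAQ k m).zpow_zpow x y).mul_zpow n, ← zpow_mul, ← zpow_mul,
    mul_comm x n, mul_comm y n]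

lemma hCw : C = w k m 1 (-(2 * m)) := by
  rw [hC]; unfold w; rw [zpow_one]

lemma conjT (x y : ℤ) :
    T * w k m x y * T⁻¹ = w k m (-x - 2 * k * y) (2 * m * x + (4 * k * m + 1) * y) := by
  have step : T * w k m x y * T⁻¹ = (T * A * T⁻¹) ^ x * (T * Q * T⁻¹) ^ y := by
    unfold w
    calc T * (A ^ x * Q ^ y) * T⁻¹
        = (T * A ^ x * T⁻¹) * (T * Q ^ y * T⁻¹) := by group
      _ = (T * A * T⁻¹) ^ x * (T * Q * T⁻¹) ^ y := by rw [hconj, hconj]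
  rw [step, hTA, hTQ]
  have h1 : (C⁻¹ : P k m) ^ x = w k m (-x) (2 * m * x) := by
    rw [inv_zpow, ← zpow_neg, hCw, w_zpow]
    exact w_eq k m (by ring) (by ring)
  have h2 : ((Q * C ^ (-(2 * k))) : P k m) ^ y
      = w k m (-(2 * k) * y) ((4 * k * m + 1) * y) := by
    have : (Q * C ^ (-(2 * k)) : P k m) = w k m (-(2 * k)) (4 * k * m + 1) := by
      have : (C : P k m) ^ (-(2 * k)) = w k m (-(2 * k)) (4 * k * m) := by
        rw [hCw, w_zpow]; exact w_eq k m (by ring) (by ring)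
      rw [this]
      have hq : (Q : P k m) = w k m 0 1 := by unfold w; rw [zpow_zero, zpow_one, one_mul]
      rw [hq, w_mul]
      exact w_eq k m (by ring) (by ring)
    rw [this, w_zpow]
    exact w_eq k m (by ring) (by ring)
  rw [h1, h2, w_mul]
  exact w_eq k m (by ring) (by ring)

lemma act1 (v : Fin 2 → ℤ) :
    solAction k m (Multiplicative.ofAdd 1) (Multiplicative.ofAdd v)
      = Multiplicative.ofAdd ((solMatrix k m).mulVec v) := by
  simp only [solAction, zpowersHom_apply, toAdd_ofAdd, zpow_one]
  have h : ((solMatrix k m).toLinearEquiv' (solMatrixInvertible k m)) v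
      = (solMatrix k m).mulVec v := by
    have := Matrix.toLinearEquiv'_apply (solMatrix k m) (solMatrixInvertible k m)
    calc ((solMatrix k m).toLinearEquiv' (solMatrixInvertible k m)) v
        = (((solMatrix k m).toLinearEquiv' (solMatrixInvertible k m) :
            Module.End ℤ (Fin 2 → ℤ))) v := rfl
      _ = Matrix.toLin' (solMatrix k m) v := by rw [this]
      _ = (solMatrix k m).mulVec v := Matrix.toLin'_apply _ _
  simp only [AddEquiv.toMultiplicative]
  exact congrArg Multiplicative.ofAdd h

lemma mulVec_eval (v : Fin 2 → ℤ) :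
    (solMatrix k m).mulVec v = ![-(v 0) - 2*k*(v 1), 2*m*(v 0) + (4*k*m+1)*(v 1)] := by
  funext i
  fin_cases i <;>
    (simp [solMatrix, Matrix.mulVec, dotProduct, Fin.sum_univ_two]; try ring)

noncomputable def wHom : Multiplicative (Fin 2 → ℤ) →* P k m :=
  MonoidHom.mk' (fun v => w k m (v.toAdd 0) (v.toAdd 1)) (by
    intro v₁ v₂
    show w k m _ _ = w k m _ _ * w k m _ _
    rw [w_mul]
    rfl)

lemma wHom_apply (v : Fin 2 → ℤ) :
    wHom k m (Multiplicative.ofAdd v) = w k m (v 0) (v 1) := rfl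

noncomputable def tHom : Multiplicative ℤ →* P k m := zpowersHom (P k m) T

lemma tHom_one : tHom k m (Multiplicative.ofAdd 1) = T := by
  simp [tHom]

lemma hcompat : ∀ g : Multiplicative ℤ,
    (wHom k m).comp ((solAction k m g).toMonoidHom)
      = (MulAut.conj (tHom k m g)).toMonoidHom.comp (wHom k m) := by
  -- reduce to pointwise statement
  set S : Multiplicative ℤ → Prop := fun g =>
    ∀ x, wHom k m (solAction k m g x) = tHom k m g * wHom k m x * (tHom k m g)⁻¹ with hS
  have base : S (Multiplicative.ofAdd 1) := by
    intro x
    have hx : x = Multiplicative.ofAdd x.toAdd := rfl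
    rw [hx, act1, mulVec_eval, wHom_apply, wHom_apply, tHom_one]
    simp only [Matrix.cons_val_zero, Matrix.cons_val_one, Matrix.head_cons]
    exact (conjT k m (x.toAdd 0) (x.toAdd 1)).symm
  have Smul : ∀ g h, S g → S h → S (g * h) := by
    intro g h hg hh x
    rw [map_mul, MulAut.mul_apply, hg, hh, map_mul]
    group
  have Sinv : ∀ g, S g → S g⁻¹ := by
    intro g hg x
    have h0 := hg ((solAction k m g⁻¹) x)
    rw [← MulAut.mul_apply, ← map_mul, mul_inv_cancel, map_one, MulAut.one_apply] at h0
    have h2 : wHom k m ((solAction k m g⁻¹) x) = (tHom k m g)⁻¹ * wHom k m x * tHom k m g := by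
      rw [h0]; group
    show wHom k m ((solAction k m g⁻¹) x)
      = tHom k m g⁻¹ * wHom k m x * (tHom k m g⁻¹)⁻¹
    rw [h2, map_inv]
    group
  have Sone : S 1 := by
    intro x
    rw [map_one, MulAut.one_apply, map_one]
    group
  have hall : ∀ n : ℤ, S (Multiplicative.ofAdd n) := by
    intro n
    induction n using Int.induction_on with
    | zero => exact Sone
    | succ i ih =>
      have : Multiplicative.ofAdd ((i : ℤ) + 1)
          = Multiplicative.ofAdd (i : ℤ) * Multiplicative.ofAdd 1 := rfl
      rw [this]; exact Smul _ _ ih base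
    | pred i ih =>
      have : Multiplicative.ofAdd (-(i : ℤ) - 1)
          = Multiplicative.ofAdd (-(i : ℤ)) * (Multiplicative.ofAdd (1:ℤ))⁻¹ := rfl
      rw [this]; exact Smul _ _ ih (Sinv _ base)
  intro g
  ext x
  exact hall g.toAdd x

abbrev SD (k m : ℤ) : Type :=
  Multiplicative (Fin 2 → ℤ) ⋊[solAction k m] Multiplicative ℤ

noncomputable def Psi : SD k m →* P k m :=
  SemidirectProduct.lift (wHom k m) (tHom k m) (hcompat k m)

def vec (x y : ℤ) : Multiplicative (Fin 2 → ℤ) := Multiplicative.ofAdd ![x, y]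

lemma vec_eq {x y x' y' : ℤ} (hx : x = x') (hy : y = y') : vec x y = vec x' y' := by
  rw [hx, hy]

lemma vec_mul (x y x' y' : ℤ) : vec x y * vec x' y' = vec (x + x') (y + y') := by
  unfold vec
  rw [← ofAdd_add]
  congr 1
  funext i
  fin_cases i <;> simp

lemma vec_zpow (x y n : ℤ) : (vec x y) ^ n = vec (n * x) (n * y) := by
  unfold vec
  rw [← ofAdd_zsmul]
  congr 1
  funext i
  fin_cases i <;> simp [mul_comm]

lemma vec_inv (x y : ℤ) : (vec x y)⁻¹ = vec (-x) (-y) := by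
  have := vec_zpow x y (-1)
  rw [zpow_neg_one] at this
  rw [this]
  exact vec_eq (by ring) (by ring)

lemma vec_one : vec 0 0 = 1 := by
  unfold vec
  have : ![(0:ℤ), 0] = 0 := by funext i; fin_cases i <;> simp
  rw [this, ofAdd_zero]

noncomputable def I (x y : ℤ) : SD k m := SemidirectProduct.inl (vec x y)

noncomputable def R : SD k m := SemidirectProduct.inr (Multiplicative.ofAdd (1 : ℤ))

lemma I_eq {x y x' y' : ℤ} (hx : x = x') (hy : y = y') : I k m x y = I k m x' y' := by
  rw [hx, hy]

lemma I_mul (x y x' y' : ℤ) : I k m x y * I k m x' y' = I k m (x + x') (y + y') := by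
  unfold I; rw [← map_mul, vec_mul]

lemma I_inv (x y : ℤ) : (I k m x y)⁻¹ = I k m (-x) (-y) := by
  unfold I; rw [← map_inv, vec_inv]

lemma I_zpow (x y n : ℤ) : (I k m x y) ^ n = I k m (n * x) (n * y) := by
  unfold I; rw [← map_zpow, vec_zpow]

lemma I_one : I k m 0 0 = 1 := by
  unfold I; rw [vec_one, map_one]

lemma act_vec (x y : ℤ) :
    solAction k m (Multiplicative.ofAdd 1) (vec x y)
      = vec (-x - 2*k*y) (2*m*x + (4*k*m+1)*y) := by
  unfold vec
  rw [act1, mulVec_eval]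
  exact congrArg Multiplicative.ofAdd (by
    congr 1 <;> simp)

lemma act_vec_inv (x y : ℤ) :
    (solAction k m (Multiplicative.ofAdd 1))⁻¹ (vec x y)
      = vec (-(4*k*m+1)*x - 2*k*y) (2*m*x + y) := by
  rw [MulAut.inv_def]
  rw [MulEquiv.symm_apply_eq]
  rw [act_vec]
  exact vec_eq (by ring) (by ring)

lemma RIR (x y : ℤ) :
    R k m * I k m x y * (R k m)⁻¹ = I k m (-x - 2*k*y) (2*m*x + (4*k*m+1)*y) := by
  unfold I R
  rw [← map_inv, ← SemidirectProduct.inl_aut, act_vec]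

lemma RinvIR (x y : ℤ) :
    (R k m)⁻¹ * I k m x y * R k m = I k m (-(4*k*m+1)*x - 2*k*y) (2*m*x + y) := by
  unfold I R
  rw [← map_inv, ← SemidirectProduct.inl_aut_inv, act_vec_inv]

noncomputable def fImg : Fin 6 → SD k m :=
  ![I k m 1 0, I k m 1 0, I k m 1 (-(2*m)), I k m 1 (-(2*m)), I k m 0 1, R k m]

lemma fImg_0 : fImg k m 0 = I k m 1 0 := rfl
lemma fImg_1 : fImg k m 1 = I k m 1 0 := rfl
lemma fImg_2 : fImg k m 2 = I k m 1 (-(2*m)) := rfl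
lemma fImg_3 : fImg k m 3 = I k m 1 (-(2*m)) := rfl
lemma fImg_4 : fImg k m 4 = I k m 0 1 := rfl
lemma fImg_5 : fImg k m 5 = R k m := rfl

lemma hrel : ∀ r ∈ solRels k m, FreeGroup.lift (fImg k m) r = 1 := by
  intro r hr
  simp only [solRels, Set.mem_insert_iff, Set.mem_singleton_iff] at hr
  rcases hr with h | h | h | h | h | h | h | h <;> subst h <;>
    simp only [map_mul, map_inv, map_zpow, FreeGroup.lift_apply_of,
      fImg_0, fImg_1, fImg_2, fImg_3, fImg_4, fImg_5]
  · -- a q a⁻¹ (c q c⁻¹)⁻¹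
    simp only [I_inv, I_mul]
    refine (I_eq k m ?_ ?_).trans (I_one k m) <;> ring
  · -- q a q⁻¹ b⁻¹
    simp only [I_inv, I_mul]
    refine (I_eq k m ?_ ?_).trans (I_one k m) <;> ring
  · -- q c q⁻¹ d⁻¹
    simp only [I_inv, I_mul]
    refine (I_eq k m ?_ ?_).trans (I_one k m) <;> ring
  · -- t a t⁻¹ c
    rw [RIR]
    simp only [I_mul]
    refine (I_eq k m ?_ ?_).trans (I_one k m) <;> ring
  · -- t b t⁻¹ (c d⁻¹ c⁻¹)⁻¹
    rw [RIR]
    simp only [I_inv, I_mul]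
    refine (I_eq k m ?_ ?_).trans (I_one k m) <;> ring
  · -- a b⁻¹
    simp only [I_inv, I_mul]
    refine (I_eq k m ?_ ?_).trans (I_one k m) <;> ring
  · -- q⁻¹ t⁻¹ q t a^(2k)
    calc (I k m 0 1)⁻¹ * (R k m)⁻¹ * I k m 0 1 * R k m * (I k m 1 0) ^ (2*k)
        = (I k m 0 1)⁻¹ * ((R k m)⁻¹ * I k m 0 1 * R k m) * (I k m 1 0) ^ (2*k) := by
          group
      _ = 1 := by
          rw [RinvIR]
          simp only [I_inv, I_zpow, I_mul]
          refine (I_eq k m ?_ ?_).trans (I_one k m) <;> ring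
  · -- a⁻¹ c q^(2m)
    simp only [I_inv, I_zpow, I_mul]
    refine (I_eq k m ?_ ?_).trans (I_one k m) <;> ring

noncomputable def Phi : P k m →* SD k m :=
  PresentedGroup.toGroup (hrel k m)

lemma w_apply (x y : ℤ) : w k m x y = A ^ x * Q ^ y := rfl

lemma Psi_I (x y : ℤ) : Psi k m (I k m x y) = w k m x y := by
  unfold Psi I
  rw [SemidirectProduct.lift_inl]
  unfold vec
  rw [wHom_apply]
  exact w_eq k m (by simp) (by simp)

lemma Psi_R : Psi k m (R k m) = T := by
  unfold Psi R
  rw [SemidirectProduct.lift_inr, tHom_one]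

lemma Phi_of (x : Fin 6) : Phi k m (PresentedGroup.of x) = fImg k m x :=
  PresentedGroup.toGroup.of (hrel k m)

lemma h1 : (Psi k m).comp (Phi k m) = MonoidHom.id (P k m) := by
  apply PresentedGroup.ext
  intro x
  fin_cases x
  · show Psi k m (Phi k m (PresentedGroup.of 0)) = PresentedGroup.of 0
    rw [Phi_of, fImg_0, Psi_I, w_apply, zpow_one, zpow_zero, mul_one]
  · show Psi k m (Phi k m (PresentedGroup.of 1)) = PresentedGroup.of 1
    rw [Phi_of, fImg_1, Psi_I, w_apply, zpow_one, zpow_zero, mul_one]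
    exact hAB k m
  · show Psi k m (Phi k m (PresentedGroup.of 2)) = PresentedGroup.of 2
    rw [Phi_of, fImg_2, Psi_I, w_apply, zpow_one]
    exact (hC k m).symm
  · show Psi k m (Phi k m (PresentedGroup.of 3)) = PresentedGroup.of 3
    rw [Phi_of, fImg_3, Psi_I, w_apply, zpow_one]
    rw [hD k m]
    exact (hC k m).symm
  · show Psi k m (Phi k m (PresentedGroup.of 4)) = PresentedGroup.of 4
    rw [Phi_of, fImg_4, Psi_I, w_apply, zpow_zero, zpow_one, one_mul]
  · show Psi k m (Phi k m (PresentedGroup.of 5)) = PresentedGroup.of 5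
    rw [Phi_of, fImg_5, Psi_R]

lemma Phi_w (x y : ℤ) : Phi k m (w k m x y) = I k m x y := by
  rw [w_apply, map_mul, map_zpow, map_zpow]
  rw [show Phi k m (PresentedGroup.of 0) = I k m 1 0 from Phi_of k m 0,
    show Phi k m (PresentedGroup.of 4) = I k m 0 1 from Phi_of k m 4,
    I_zpow, I_zpow, I_mul]
  exact I_eq k m (by ring) (by ring)

lemma h2 : (Phi k m).comp (Psi k m) = MonoidHom.id (SD k m) := by
  apply SemidirectProduct.hom_ext
  · refine MonoidHom.ext fun n => ?_
    simp only [MonoidHom.comp_apply, MonoidHom.id_apply, MonoidHom.coe_comp,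
      Function.comp_apply]
    show Phi k m (Psi k m (SemidirectProduct.inl n)) = SemidirectProduct.inl n
    unfold Psi
    rw [SemidirectProduct.lift_inl]
    have hn : n = Multiplicative.ofAdd n.toAdd := rfl
    rw [hn, wHom_apply, Phi_w]
    unfold I vec
    congr 1
    funext i
    fin_cases i <;> rfl
  · refine MonoidHom.ext_mint ?_
    simp only [MonoidHom.comp_apply, MonoidHom.id_apply, MonoidHom.coe_comp,
      Function.comp_apply]
    show Phi k m (Psi k m (SemidirectProduct.inr (Multiplicative.ofAdd 1)))
      = SemidirectProduct.inr (Multiplicative.ofAdd 1)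
    unfold Psi
    rw [SemidirectProduct.lift_inr, tHom_one]
    rw [show Phi k m (PresentedGroup.of 5) = R k m from Phi_of k m 5]
    rfl

end Sol18

/-- Let `k, m` be integers and let `G` be the group with presentation
`⟨a, b, c, d, q, t ∣ a q a⁻¹ = c q c⁻¹, q a q⁻¹ = b, q c q⁻¹ = d, t a t⁻¹ = c⁻¹,
t b t⁻¹ = c d⁻¹ c⁻¹, a b⁻¹ = 1, q⁻¹ t⁻¹ q t a^{2k} = 1, a⁻¹ c q^{2m} = 1⟩`.
Then `G` is isomorphic to the semidirect product `ℤ² ⋊_A ℤ`, where the generator of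
`ℤ` acts on `ℤ²` by the matrix `A = [[−1, −2k], [2m, 4km+1]]`. -/
theorem stmt18 (k m : ℤ) :
    Nonempty (PresentedGroup (solRels k m) ≃* SolGroup k m) := by
  unfold SolGroup
  exact ⟨MonoidHom.toMulEquiv (Sol18.Phi k m) (Sol18.Psi k m) (Sol18.h1 k m) (Sol18.h2 k m)⟩
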